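/- Let a > 1 be a real number and define β(z) = (a²·z + 1)/(a·(z + 1)) for complex z. If z ∈ ℂ satisfies Im z > 0 and |z| = a⁻², then β(a²·z)/β(z) is a positive real number, i.e. there exists r > 0 with β(a²·z) = r·β(z). -/

import Mathlib

/-- Let `a > 1` and `β(z) = (a²·z + 1)/(a·(z + 1))`.  If `Im z > 0` and `|z| = a⁻²`,
then `β(a²·z)/β(z)` is a positive real number: there is `r > 0` with
`β(a²·z) = r·β(z)`. -/
theorem stmt_6 (a : ℝ) (ha : 1 < a) (β : ℂ → ℂ)
    (hβ : ∀ z : ℂ, β z = ((a : ℂ) ^ 2 * z + 1) / ((a : ℂ) * (z + 1)))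
    (z : ℂ) (hz : 0 < z.im) (habs : ‖z‖ = (a ^ 2)⁻¹) :
    ∃ r : ℝ, 0 < r ∧ β ((a : ℂ) ^ 2 * z) = (r : ℂ) * β z := by
  have ha0 : (0:ℝ) < a := lt_trans one_pos ha
  have haC : (a:ℂ) ≠ 0 := by exact_mod_cast ha0.ne'
  have hz1 : z + 1 ≠ 0 := by
    intro h
    have : (z + 1).im = 0 := by rw [h]; simp
    simp at this; linarith
  have h2 : (a:ℂ)^2 * z + 1 ≠ 0 := by
    intro h
    have him : ((a:ℂ)^2 * z + 1).im = a^2 * z.im := by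
      simp [Complex.add_im, Complex.mul_im, ← Complex.ofReal_pow]
    rw [h] at him
    simp at him
    rcases him with h' | h' <;> [linarith; linarith]
  have hkey : (a:ℂ)^4 * (z * (starRingEnd ℂ) z) = 1 := by
    rw [Complex.mul_conj]
    have : Complex.normSq z = (a^4)⁻¹ := by
      rw [Complex.normSq_eq_norm_sq, habs]
      rw [← Real.rpow_natCast]
      field_simp
      rw [Real.rpow_natCast, div_pow, one_pow, ← pow_mul, mul_one_div, div_self (pow_ne_zero 4 ha0.ne')]
    rw [this]
    push_cast
    field_simp
  have hn1 : Complex.normSq (z + 1) ≠ 0 := (Complex.normSq_pos.mpr hz1).ne'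
  have hn2 : Complex.normSq ((a:ℂ)^2 * z + 1) ≠ 0 := (Complex.normSq_pos.mpr h2).ne'
  refine ⟨a^2 * Complex.normSq (z + 1) / Complex.normSq ((a:ℂ)^2 * z + 1), ?_, ?_⟩
  · exact div_pos (mul_pos (pow_pos ha0 2) (Complex.normSq_pos.mpr hz1)) (Complex.normSq_pos.mpr h2)
  · rw [hβ, hβ]
    have hcast : ((a^2 * Complex.normSq (z + 1) / Complex.normSq ((a:ℂ)^2 * z + 1) : ℝ) : ℂ)
        = (a:ℂ)^2 * ((z+1) * (starRingEnd ℂ) (z+1)) / (((a:ℂ)^2 * z + 1) * (starRingEnd ℂ) ((a:ℂ)^2 * z + 1)) := by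
      rw [Complex.mul_conj, Complex.mul_conj]
      push_cast
      ring
    rw [hcast]
    have hc1 : (starRingEnd ℂ) (z + 1) = (starRingEnd ℂ) z + 1 := by simp
    have hc2 : (starRingEnd ℂ) ((a:ℂ)^2 * z + 1) = (a:ℂ)^2 * (starRingEnd ℂ) z + 1 := by
      simp [map_mul, map_pow]
    rw [hc1, hc2]
    have hcne : (a:ℂ)^2 * (starRingEnd ℂ) z + 1 ≠ 0 := by
      intro h
      apply h2
      have := congrArg (starRingEnd ℂ) h
      simpa [map_mul, map_pow, Complex.conj_conj] using this
    field_simp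
    linear_combination ((a:ℂ)^2-1) * hkey
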